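/- Let H be a finitely generated infinite group with finite symmetric generating set S. Suppose there exist a constant C > 0 and finite subsets F_n of H such that the edge boundary of each F_n in the Cayley graph Cay(H,S) has at most C edges, while |F_n| tends to infinity. Then H has at least 2 ends (i.e., there is a finite set K of vertices such that the complement of K in the Cayley graph has at least two infinite connected components). -/

import Mathlib

open MeasureTheory ENNReal Filter

/-- The Cayley graph of a group with respect to a (symmetric) generating set `S`. -/
def cayley {H : Type*} [Group H] (S : Set H) : SimpleGraph H :=
  SimpleGraph.fromRel (fun g h => g⁻¹ * h ∈ S)

/-- The edge boundary of a vertex set `F`: edges of the Cayley graph with exactly one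
endpoint in `F`. -/
def edgeBoundary {H : Type*} [Group H] (S : Set H) (F : Set H) : Set (Sym2 H) :=
  {e | ∃ a b : H, e = s(a, b) ∧ (cayley S).Adj a b ∧ a ∈ F ∧ b ∉ F}

/-- Reachability within a vertex subset `A` of the Cayley graph: there is a walk all of
whose vertices lie in `A`. -/
def reachIn {H : Type*} [Group H] (S : Set H) (A : Set H) (g h : H) : Prop :=
  ∃ w : (cayley S).Walk g h, ∀ v ∈ w.support, v ∈ A

/-- The connected component of `g` in the induced subgraph on `A`. -/
def compIn {H : Type*} [Group H] (S : Set H) (A : Set H) (g : H) : Set H :=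
  {h | reachIn S A g h}

namespace EndsProof

variable {H : Type*} [Group H] {S : Finset H}

lemma cayley_adj {a b : H} :
    (cayley (S : Set H)).Adj a b ↔ a ≠ b ∧ (a⁻¹ * b ∈ S ∨ b⁻¹ * a ∈ S) := by
  simp [cayley, SimpleGraph.fromRel_adj]

/-- Left multiplication as a graph homomorphism of the Cayley graph. -/
def mulHom (S : Finset H) (g : H) : cayley (S : Set H) →g cayley (S : Set H) where
  toFun x := g * x
  map_rel' := by
    intro a b h
    rw [cayley_adj] at h ⊢
    obtain ⟨hne, h2⟩ := h
    refine ⟨by simpa using hne, ?_⟩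
    simpa [mul_assoc, mul_inv_rev] using h2

@[simp] lemma mulHom_apply (g x : H) : mulHom S g x = g * x := rfl

lemma reachIn_smul {A : Set H} {x y : H} (g : H) (h : reachIn (S : Set H) A x y) :
    reachIn (S : Set H) ((g * ·) '' A) (g * x) (g * y) := by
  obtain ⟨w, hw⟩ := h
  refine ⟨w.map (mulHom S g), ?_⟩
  intro v hv
  replace hv := Eq.mp (congrArg (v ∈ ·) (SimpleGraph.Walk.support_map (mulHom S g) w)) hv
  obtain ⟨u, hu, rfl⟩ := List.mem_map.mp hv
  exact ⟨u, hw u hu, rfl⟩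

/-- metric ball via walks -/
def mball (S : Finset H) (x : H) (r : ℕ) : Set H :=
  {y | ∃ w : (cayley (S : Set H)).Walk x y, w.length ≤ r}

lemma self_mem_mball (x : H) (r : ℕ) : x ∈ mball S x r :=
  ⟨SimpleGraph.Walk.nil, by simp⟩

lemma mball_mono {x : H} {r r' : ℕ} (h : r ≤ r') : mball S x r ⊆ mball S x r' :=
  fun _ ⟨w, hw⟩ => ⟨w, hw.trans h⟩

lemma mball_subset_of_adj {a b : H} {r : ℕ} (h : (cayley (S : Set H)).Adj a b) :
    mball S b r ⊆ mball S a (r + 1) := by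
  rintro y ⟨w, hw⟩
  exact ⟨SimpleGraph.Walk.cons h w, by simpa using hw⟩

lemma nbhd_finite (a : H) : {b : H | (cayley (S : Set H)).Adj a b}.Finite := by
  have : {b : H | (cayley (S : Set H)).Adj a b} ⊆
      ((a * ·) '' (S : Set H)) ∪ ((fun s => a * s⁻¹) '' (S : Set H)) := by
    intro b hb
    rw [Set.mem_setOf_eq, cayley_adj] at hb
    rcases hb.2 with h | h
    · exact Or.inl ⟨a⁻¹ * b, h, by group⟩
    · exact Or.inr ⟨b⁻¹ * a, h, by group⟩
  exact Set.Finite.subset ((S.finite_toSet.image _).union (S.finite_toSet.image _)) this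

lemma length_le_zero_eq {x y : H} (w : (cayley (S : Set H)).Walk x y) (h : w.length ≤ 0) :
    y = x := by
  cases w with
  | nil => rfl
  | cons h' w' => simp at h

lemma mball_finite (x : H) (r : ℕ) : (mball S x r).Finite := by
  induction r generalizing x with
  | zero =>
    refine Set.Finite.subset (Set.finite_singleton x) ?_
    rintro y ⟨w, hw⟩
    simp [length_le_zero_eq w hw]
  | succ r ih =>
    have hsub : mball S x (r + 1) ⊆
        {x} ∪ ⋃ y ∈ {b : H | (cayley (S : Set H)).Adj x b}, mball S y r := by
      rintro z ⟨w, hw⟩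
      cases w with
      | nil => exact Or.inl rfl
      | cons h' w' =>
        refine Or.inr ?_
        simp only [Set.mem_iUnion]
        exact ⟨_, h', w', by simpa using hw⟩
    exact Set.Finite.subset ((Set.finite_singleton x).union
      ((nbhd_finite x).biUnion (fun y _ => ih y))) hsub

lemma mball_smul (g x : H) (r : ℕ) : (g * ·) '' mball S x r = mball S (g * x) r := by
  apply Set.Subset.antisymm
  · rintro _ ⟨y, ⟨w, hw⟩, rfl⟩
    exact ⟨w.map (mulHom S g), (SimpleGraph.Walk.length_map _ _).le.trans hw⟩
  · rintro y ⟨w, hw⟩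
    refine ⟨g⁻¹ * y, ⟨(w.map (mulHom S g⁻¹)).copy (by simp only [mulHom_apply]; group) rfl, (SimpleGraph.Walk.length_copy _ _ _).le.trans ((SimpleGraph.Walk.length_map _ _).le.trans hw)⟩, by group⟩

lemma ncard_mball (x : H) (r : ℕ) : (mball S x r).ncard = (mball S 1 r).ncard := by
  have h := mball_smul (S := S) x 1 r
  rw [mul_one] at h
  rw [← h, Set.ncard_image_of_injective _ (mul_right_injective x)]

lemma reachIn_refl {A : Set H} {x : H} (hx : x ∈ A) : reachIn (S : Set H) A x x :=
  ⟨SimpleGraph.Walk.nil, by simpa using hx⟩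

lemma reachIn_symm {A : Set H} {x y : H} (h : reachIn (S : Set H) A x y) :
    reachIn (S : Set H) A y x := by
  obtain ⟨w, hw⟩ := h
  exact ⟨w.reverse, by simpa using hw⟩

lemma reachIn_trans {A : Set H} {x y z : H} (h1 : reachIn (S : Set H) A x y)
    (h2 : reachIn (S : Set H) A y z) : reachIn (S : Set H) A x z := by
  obtain ⟨w1, hw1⟩ := h1
  obtain ⟨w2, hw2⟩ := h2
  refine ⟨w1.append w2, ?_⟩
  intro v hv
  rw [SimpleGraph.Walk.support_append] at hv
  rcases List.mem_append.mp hv with h | h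
  · exact hw1 v h
  · exact hw2 v (List.mem_of_mem_tail h)

lemma reachIn_mono {A B : Set H} (hAB : A ⊆ B) {x y : H} (h : reachIn (S : Set H) A x y) :
    reachIn (S : Set H) B x y := by
  obtain ⟨w, hw⟩ := h
  exact ⟨w, fun v hv => hAB (hw v hv)⟩

lemma reachIn_mem_left {A : Set H} {x y : H} (h : reachIn (S : Set H) A x y) : x ∈ A := by
  obtain ⟨w, hw⟩ := h
  exact hw x w.start_mem_support

lemma reachIn_mem_right {A : Set H} {x y : H} (h : reachIn (S : Set H) A x y) : y ∈ A := by
  obtain ⟨w, hw⟩ := h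
  exact hw y w.end_mem_support

lemma reachIn_cons {A : Set H} {x x' v : H} (h : (cayley (S : Set H)).Adj x x') (hx : x ∈ A)
    (hr : reachIn (S : Set H) A x' v) : reachIn (S : Set H) A x v := by
  obtain ⟨w, hw⟩ := hr
  refine ⟨SimpleGraph.Walk.cons h w, ?_⟩
  intro u hu
  rw [SimpleGraph.Walk.support_cons] at hu
  rcases List.mem_cons.mp hu with rfl | hu
  · exact hx
  · exact hw u hu

lemma compIn_mono {A B : Set H} (hAB : A ⊆ B) (x : H) :
    compIn (S : Set H) A x ⊆ compIn (S : Set H) B x :=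
  fun _ h => reachIn_mono hAB h

lemma compIn_subset {A : Set H} (x : H) : compIn (S : Set H) A x ⊆ A :=
  fun _ h => reachIn_mem_right h

lemma compIn_eq_of_reach {A : Set H} {x y : H} (h : reachIn (S : Set H) A x y) :
    compIn (S : Set H) A x = compIn (S : Set H) A y := by
  ext v
  exact ⟨fun hv => reachIn_trans (reachIn_symm h) hv, fun hv => reachIn_trans h hv⟩

/-- every vertex on a walk whose support lies in `A` is reachable within `A`. -/
lemma reach_of_mem_support {A : Set H} : ∀ {x y : H} (w : (cayley (S : Set H)).Walk x y),
    (∀ v ∈ w.support, v ∈ A) → ∀ v ∈ w.support, reachIn (S : Set H) A x v := by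
  intro x y w
  induction w with
  | nil =>
    intro hw v hv
    simp only [SimpleGraph.Walk.support_nil, List.mem_singleton] at hv
    subst hv
    exact reachIn_refl (hw v (by simp))
  | @cons a b c h w ih =>
    intro hw v hv
    rw [SimpleGraph.Walk.support_cons] at hv hw
    have ha : a ∈ A := hw a (by simp)
    rcases List.mem_cons.mp hv with rfl | hv
    · exact reachIn_refl ha
    · exact reachIn_cons h ha (ih (fun u hu => hw u (List.mem_cons_of_mem _ hu)) v hv)

/-- a walk from inside `A` to outside `A` contains a crossing edge on its support. -/
lemma crossing {A : Set H} : ∀ {x y : H} (w : (cayley (S : Set H)).Walk x y),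
    x ∈ A → y ∉ A → ∃ a b, a ∈ w.support ∧ b ∈ w.support ∧
      (cayley (S : Set H)).Adj a b ∧ a ∈ A ∧ b ∉ A := by
  intro x y w
  induction w with
  | nil => intro hx hy; exact absurd hx hy
  | @cons a b c h w ih =>
    intro hx hy
    by_cases hb : b ∈ A
    · obtain ⟨u, v, hu, hv, huv⟩ := ih hb hy
      exact ⟨u, v, by simp [hu], by simp [hv], huv⟩
    · exact ⟨a, b, by simp, by simp [SimpleGraph.Walk.start_mem_support], h, hx, hb⟩

/-- inner vertex boundary -/
def innB (S : Finset H) (X : Set H) : Set H :=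
  {a | a ∈ X ∧ ∃ b, (cayley (S : Set H)).Adj a b ∧ b ∉ X}

lemma innB_subset (X : Set H) : innB S X ⊆ X := fun _ h => h.1
lemma reachable_smul {x y : H} (g : H) (h : (cayley (S : Set H)).Reachable x y) :
    (cayley (S : Set H)).Reachable (g * x) (g * y) := by
  obtain ⟨w⟩ := h
  exact ⟨w.map (mulHom S g)⟩

lemma cayley_preconnected (hgen : Subgroup.closure (S : Set H) = ⊤) :
    ∀ x y : H, (cayley (S : Set H)).Reachable x y := by
  have key : ∀ x : H, (cayley (S : Set H)).Reachable 1 x := by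
    intro x
    have hx : x ∈ Subgroup.closure (S : Set H) := by rw [hgen]; trivial
    induction hx using Subgroup.closure_induction with
    | mem s hs =>
      by_cases h1 : s = 1
      · subst h1; exact SimpleGraph.Reachable.refl 1
      · exact SimpleGraph.Adj.reachable (cayley_adj.mpr ⟨Ne.symm h1, Or.inl (by simpa using hs)⟩)
    | one => exact SimpleGraph.Reachable.refl 1
    | mul a b _ _ ha hb =>
      refine ha.trans ?_
      have := reachable_smul (S := S) a hb
      rwa [mul_one] at this
    | inv a _ ha =>
      have := reachable_smul (S := S) a⁻¹ ha
      rw [mul_one, inv_mul_cancel] at this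
      exact this.symm
  intro x y
  exact (key x).symm.trans (key y)

/-- from any point of `X` one can reach an inner-boundary vertex of `X` within `X`. -/
lemma exists_innB (hgen : Subgroup.closure (S : Set H) = ⊤) {X : Set H} {x z : H}
    (hx : x ∈ X) (hz : z ∉ X) : ∃ a, reachIn (S : Set H) X x a ∧ a ∈ innB S X := by
  suffices h : ∀ {x' z' : H} (w : (cayley (S : Set H)).Walk x' z'), x' ∈ X → z' ∉ X →
      ∃ a, reachIn (S : Set H) X x' a ∧ a ∈ innB S X by
    obtain ⟨w⟩ := cayley_preconnected hgen x z
    exact h w hx hz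
  intro x' z' w
  induction w with
  | nil => intro h1 h2; exact absurd h1 h2
  | @cons a b c h w ih =>
    intro hx' hz'
    by_cases hb : b ∈ X
    · obtain ⟨u, hu1, hu2⟩ := ih hb hz'
      exact ⟨u, reachIn_cons h hx' hu1, hu2⟩
    · exact ⟨a, reachIn_refl hx', hx', b, h, hb⟩

lemma innB_encard_le (X : Set H) : (innB S X).encard ≤ (edgeBoundary (S : Set H) X).encard := by
  classical
  set f : H → Sym2 H := fun a =>
    if h : ∃ b, (cayley (S : Set H)).Adj a b ∧ b ∉ X then s(a, h.choose) else s(a, a) with hf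
  have himg : f '' innB S X ⊆ edgeBoundary (S : Set H) X := by
    rintro _ ⟨a, ⟨haX, hab⟩, rfl⟩
    rw [hf]
    simp only [dif_pos hab]
    exact ⟨a, hab.choose, rfl, hab.choose_spec.1, haX, hab.choose_spec.2⟩
  have hinj : Set.InjOn f (innB S X) := by
    rintro a ⟨haX, hab⟩ a' ⟨haX', hab'⟩ he
    rw [hf] at he
    simp only [dif_pos hab, dif_pos hab'] at he
    rcases Sym2.eq_iff.mp he with ⟨h1, _⟩ | ⟨h1, h2⟩
    · exact h1
    · exact absurd (h1 ▸ haX) hab'.choose_spec.2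
  calc (innB S X).encard = (f '' innB S X).encard := (hinj.encard_image).symm
    _ ≤ _ := Set.encard_mono himg

lemma edgeBoundary_compl (X : Set H) :
    edgeBoundary (S : Set H) Xᶜ = edgeBoundary (S : Set H) X := by
  have key : ∀ Y : Set H, edgeBoundary (S : Set H) Yᶜ ⊆ edgeBoundary (S : Set H) Y := by
    rintro Y _ ⟨a, b, rfl, hadj, ha, hb⟩
    exact ⟨b, a, Sym2.eq_swap, hadj.symm, not_not.mp hb, ha⟩
  refine Set.Subset.antisymm (key X) ?_
  have := key Xᶜ
  rwa [compl_compl] at this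

lemma edgeBoundary_smul_encard (g : H) (X : Set H) :
    (edgeBoundary (S : Set H) ((g * ·) '' X)).encard ≤ (edgeBoundary (S : Set H) X).encard := by
  have hsub : edgeBoundary (S : Set H) ((g * ·) '' X) ⊆
      Sym2.map (g * ·) '' edgeBoundary (S : Set H) X := by
    rintro _ ⟨a, b, rfl, hadj, ha, hb⟩
    refine ⟨s(g⁻¹ * a, g⁻¹ * b), ⟨g⁻¹ * a, g⁻¹ * b, rfl, ?_, ?_, ?_⟩, ?_⟩
    · rw [cayley_adj] at hadj ⊢
      refine ⟨fun hc => hadj.1 (by rw [← mul_left_cancel_iff (a := g⁻¹)]; simpa using hc), ?_⟩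
      have : (g⁻¹ * a)⁻¹ * (g⁻¹ * b) = a⁻¹ * b := by group
      have h2 : (g⁻¹ * b)⁻¹ * (g⁻¹ * a) = b⁻¹ * a := by group
      rw [this, h2]
      exact hadj.2
    · obtain ⟨u, hu, rfl⟩ := ha
      simpa using hu
    · intro hc
      exact hb ⟨g⁻¹ * b, hc, by group⟩
    · simp only [Sym2.map_pair_eq]
      congr 1 <;> group
  exact (Set.encard_mono hsub).trans (Set.encard_image_le _ _)
lemma support_get_mem_mball : ∀ {x y : H} (w : (cayley (S : Set H)).Walk x y) (i : ℕ)
    (hi : i < w.support.length), w.support.get ⟨i, hi⟩ ∈ mball S x i := by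
  intro x y w
  induction w with
  | nil =>
    intro i hi
    simp only [SimpleGraph.Walk.support_nil, List.length_singleton] at hi
    have : i = 0 := Nat.lt_one_iff.mp hi
    subst this
    exact self_mem_mball _ _
  | @cons a b c h w ih =>
    intro i hi
    cases i with
    | zero => exact self_mem_mball _ _
    | succ j =>
      have hj : j < w.support.length := by
        simpa [SimpleGraph.Walk.support_cons] using hi
      have hget : (SimpleGraph.Walk.cons h w).support.get ⟨j + 1, hi⟩ =
          w.support.get ⟨j, hj⟩ := by
        simp [SimpleGraph.Walk.support_cons]
      rw [hget]
      exact mball_subset_of_adj h (ih j hj)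

/-- a point of `A` far from `x` but reachable within `A` forces many points of the
component of `x` inside the ball. -/
lemma big_comp {A : Set H} {x z : H} {r : ℕ} (h : reachIn (S : Set H) A x z)
    (hz : z ∉ mball S x r) :
    r + 1 ≤ (compIn (S : Set H) A x ∩ mball S x r).ncard := by
  classical
  obtain ⟨w, hw⟩ := h
  set p := w.bypass with hp
  have hpath : p.IsPath := w.bypass_isPath
  have hsup : p.support ⊆ w.support := w.support_bypass_subset
  have hlen : r < p.length := by
    by_contra hc
    exact hz ⟨p, not_lt.mp hc⟩
  have hLlen : p.support.length = p.length + 1 := p.length_support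
  set f : Fin (r + 1) → H := fun i => p.support.get ⟨i, by omega⟩ with hf
  have hinj : Function.Injective f := by
    intro i j hij
    rw [hf] at hij
    have := (List.Nodup.get_inj_iff hpath.support_nodup).mp hij
    exact Fin.ext (by simpa using congrArg Fin.val this)
  have hrange : Set.range f ⊆ compIn (S : Set H) A x ∩ mball S x r := by
    rintro _ ⟨i, rfl⟩
    constructor
    · exact reach_of_mem_support w hw _ (hsup (List.get_mem _ _))
    · exact mball_mono (by omega) (support_get_mem_mball p i (by omega))
  have hcard : (Set.range f).ncard = r + 1 := by
    rw [← Set.image_univ, Set.ncard_image_of_injective _ hinj, Set.ncard_univ]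
    simp
  rw [← hcard]
  exact Set.ncard_le_ncard hrange ((mball_finite x r).inter_of_right _)

lemma ncard_biUnion_le {B : ℕ} (f : H → Set H) :
    ∀ {I : Set H}, I.Finite → (∀ a ∈ I, (f a).ncard ≤ B ∧ (f a).Finite) →
    (⋃ a ∈ I, f a).ncard ≤ I.ncard * B := by
  intro I hI
  refine Set.Finite.induction_on (motive := fun I _ => (∀ a ∈ I, (f a).ncard ≤ B ∧ (f a).Finite) →
      (⋃ a ∈ I, f a).ncard ≤ I.ncard * B) I hI (by simp) ?_ 
  intro a s ha hs ih hf
  · 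
    rw [Set.biUnion_insert]
    calc ((f a) ∪ ⋃ x ∈ s, f x).ncard ≤ (f a).ncard + (⋃ x ∈ s, f x).ncard :=
          Set.ncard_union_le _ _
      _ ≤ B + s.ncard * B := by
          gcongr
          · exact (hf a (Set.mem_insert a s)).1
          · exact ih (fun b hb => hf b (Set.mem_insert_of_mem _ hb))
      _ = (insert a s).ncard * B := by
          rw [Set.ncard_insert_of_notMem ha hs]; ring
/-- volume of the radius-`m` ball -/
noncomputable def V (S : Finset H) (m : ℕ) : ℕ := (mball S 1 m).ncard

/-- the conclusion of the main theorem -/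
def Ends2 (S : Finset H) : Prop :=
  ∃ K : Set H, K.Finite ∧ ∃ g h : H, g ∉ K ∧ h ∉ K ∧
    (compIn (S : Set H) Kᶜ g).Infinite ∧ (compIn (S : Set H) Kᶜ h).Infinite ∧
    ¬ reachIn (S : Set H) Kᶜ g h

lemma key [Infinite H] (hgen : Subgroup.closure (S : Set H) = ⊤) {C : ℕ} (m : ℕ)
    {F : Set H} (hFfin : F.Finite) (hFbd : (edgeBoundary (S : Set H) F).encard ≤ C)
    (hFbig : C * V S m + C + 1 ≤ F.ncard) :
    Ends2 S ∨ ∃ E : Set H,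
      (edgeBoundary (S : Set H) E).encard ≤ C ∧
      ∀ r, r ≤ m → (r ≤ (E ∩ mball S 1 r).ncard ∧ r ≤ (Eᶜ ∩ mball S 1 r).ncard) := by
  have hFne : F.Nonempty := by
    rw [← Set.ncard_pos hFfin]; omega
  obtain ⟨x0, hx0⟩ := hFne
  have hx0' : x0 ∉ Fᶜ := not_not.mpr hx0
  have hFc_inf : Fᶜ.Infinite := hFfin.infinite_compl
  -- the inner boundary of the complement is small
  have h1 : (innB S Fᶜ).encard ≤ C := by
    refine (innB_encard_le _).trans ?_
    rw [edgeBoundary_compl]; exact hFbd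
  have hIfin : (innB S Fᶜ).Finite := Set.finite_of_encard_le_coe h1
  -- there is an infinite component of the complement
  have hcov : Fᶜ ⊆ ⋃ a ∈ innB S Fᶜ, compIn (S : Set H) Fᶜ a := by
    intro x hx
    obtain ⟨a, hr, ha⟩ := exists_innB hgen hx hx0'
    exact Set.mem_biUnion ha (reachIn_symm hr)
  obtain ⟨z, hzI, hQinf⟩ : ∃ z ∈ innB S Fᶜ, (compIn (S : Set H) Fᶜ z).Infinite := by
    by_contra hc
    push_neg at hc
    exact hFc_inf (Set.Finite.subset (hIfin.biUnion hc) hcov)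
  set Q := compIn (S : Set H) Fᶜ z with hQ
  have hzFc : z ∈ Fᶜ := hzI.1
  have hzQ : z ∈ Q := reachIn_refl hzFc
  by_cases hdone : ∃ x, x ∈ Fᶜ ∧ (compIn (S : Set H) Fᶜ x).Infinite ∧
      ¬ reachIn (S : Set H) Fᶜ z x
  · -- two infinite components of the complement of the finite set F : done
    left
    obtain ⟨x, hx1, hx2, hx3⟩ := hdone
    exact ⟨F, hFfin, x, z, hx1, hzFc, hx2, hQinf, fun h => hx3 (reachIn_symm h)⟩
  push_neg at hdone
  right
  -- fill in the finite components of the complement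
  have hQc_fin : Qᶜ.Finite := by
    have hsub : Qᶜ ⊆ F ∪ ⋃ a ∈ {a ∈ innB S Fᶜ | (compIn (S : Set H) Fᶜ a).Finite},
        compIn (S : Set H) Fᶜ a := by
      intro x hx
      by_cases hxF : x ∈ F
      · exact Or.inl hxF
      · have hxFc : x ∈ Fᶜ := hxF
        obtain ⟨a, hr, ha⟩ := exists_innB hgen hxFc hx0'
        have hfin : (compIn (S : Set H) Fᶜ a).Finite := by
          by_contra hinf
          have hx_inf : (compIn (S : Set H) Fᶜ x).Infinite := by
            rw [compIn_eq_of_reach hr]; exact hinf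
          exact hx (hdone x hxFc hx_inf)
        exact Or.inr (Set.mem_biUnion ⟨ha, hfin⟩ (reachIn_symm hr))
    refine Set.Finite.subset (hFfin.union ((hIfin.subset (Set.sep_subset _ _)).biUnion
      (fun a ha => ha.2))) hsub
  set E := Qᶜ with hE
  have hEc : Eᶜ = Q := compl_compl Q
  have hFE : F ⊆ E := by
    intro x hxF hxQ
    exact (compIn_subset z hxQ) hxF
  have hEfin : E.Finite := hQc_fin
  -- boundary of E is small
  have hQsub : edgeBoundary (S : Set H) Q ⊆ edgeBoundary (S : Set H) F := by
    rintro _ ⟨a, b, rfl, hadj, haQ, hbQ⟩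
    have haFc : a ∈ Fᶜ := compIn_subset z haQ
    have hbF : b ∈ F := by
      by_contra hbF
      have hab : reachIn (S : Set H) Fᶜ a b :=
        ⟨SimpleGraph.Walk.cons hadj SimpleGraph.Walk.nil, by
          intro v hv
          simp only [SimpleGraph.Walk.support_cons, SimpleGraph.Walk.support_nil,
            List.mem_cons, List.mem_singleton, List.not_mem_nil, or_false] at hv
          rcases hv with rfl | rfl
          · exact haFc
          · exact hbF⟩
      exact hbQ (reachIn_trans haQ hab)
    exact ⟨b, a, Sym2.eq_swap, hadj.symm, hbF, haFc⟩
  have hEbd : (edgeBoundary (S : Set H) E).encard ≤ C := by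
    rw [hE, edgeBoundary_compl]
    exact (Set.encard_mono hQsub).trans hFbd
  -- inner boundary of E is small
  have hIE : (innB S E).encard ≤ C := (innB_encard_le E).trans hEbd
  have hIEfin : (innB S E).Finite := Set.finite_of_encard_le_coe hIE
  have hIEcard : (innB S E).ncard ≤ C := by
    have := hIEfin.cast_ncard_eq
    rw [← this] at hIE
    exact_mod_cast hIE
  have hzE : z ∉ E := not_not.mpr hzQ
  have hEcov : E ⊆ ⋃ a ∈ innB S E, compIn (S : Set H) E a := by
    intro x hx
    obtain ⟨a, hr, ha⟩ := exists_innB hgen hx hzE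
    exact Set.mem_biUnion ha (reachIn_symm hr)
  -- a big component of E
  obtain ⟨a0, ha0I, ha0big⟩ : ∃ a0 ∈ innB S E, V S m < (compIn (S : Set H) E a0).ncard := by
    by_contra hc
    push_neg at hc
    have hle : E.ncard ≤ C * V S m := by
      calc E.ncard ≤ (⋃ a ∈ innB S E, compIn (S : Set H) E a).ncard := by
            refine Set.ncard_le_ncard hEcov (hIEfin.biUnion ?_)
            exact fun a _ => hEfin.subset (compIn_subset a)
        _ ≤ (innB S E).ncard * V S m := by
            refine ncard_biUnion_le _ hIEfin (fun a ha => ⟨hc a ha, hEfin.subset (compIn_subset a)⟩)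
        _ ≤ C * V S m := Nat.mul_le_mul_right _ hIEcard
    have : F.ncard ≤ E.ncard := Set.ncard_le_ncard hFE hEfin
    omega
  obtain ⟨ha0E, b, hadj, hbE⟩ := ha0I
  -- a far point in the big component
  obtain ⟨z1, hz1c, hz1b⟩ : ∃ z1 ∈ compIn (S : Set H) E a0, z1 ∉ mball S a0 m := by
    by_contra hc
    push_neg at hc
    have := Set.ncard_le_ncard hc (mball_finite a0 m)
    rw [ncard_mball] at this
    have hV : V S m = (mball S 1 m).ncard := rfl
    omega
  have hAside : ∀ r, r ≤ m → r ≤ ((E ∩ mball S a0 r)).ncard := by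
    intro r hr
    have hb := big_comp hz1c (fun hmem => hz1b (mball_mono hr hmem))
    have hsub : compIn (S : Set H) E a0 ∩ mball S a0 r ⊆ E ∩ mball S a0 r :=
      Set.inter_subset_inter_left _ (compIn_subset a0)
    have := Set.ncard_le_ncard hsub ((mball_finite a0 r).inter_of_right _)
    omega
  -- complement side
  have hbQ : b ∈ Q := by rw [← hEc]; exact hbE
  have hreachQ : ∀ y ∈ Q, reachIn (S : Set H) Q b y := by
    intro y hy
    obtain ⟨w, hw⟩ := reachIn_trans (reachIn_symm hbQ) hy
    refine ⟨w, fun v hv => ?_⟩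
    exact reachIn_trans hbQ (reach_of_mem_support w hw v hv)
  obtain ⟨z2, hz2Q, hz2b⟩ : ∃ z2 ∈ Q, z2 ∉ mball S b m := by
    obtain ⟨z2, hz2⟩ := (hQinf.diff (mball_finite b m)).nonempty
    exact ⟨z2, hz2.1, hz2.2⟩
  have hBside : ∀ r, r ≤ m → r ≤ ((Eᶜ ∩ mball S a0 r)).ncard := by
    intro r hr
    rcases Nat.eq_zero_or_pos r with rfl | hrpos
    · omega
    obtain ⟨r', rfl⟩ : ∃ r', r = r' + 1 := ⟨r - 1, by omega⟩
    have hz2m : z2 ∉ mball S b r' := fun hmem => hz2b (mball_mono (show r' ≤ m by omega) hmem)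
    have hb2 := big_comp (hreachQ z2 hz2Q) hz2m
    have hsub : compIn (S : Set H) Q b ∩ mball S b r' ⊆ Eᶜ ∩ mball S a0 (r' + 1) := by
      refine Set.inter_subset_inter ?_ (mball_subset_of_adj hadj)
      rw [hEc]; exact compIn_subset b
    have := Set.ncard_le_ncard hsub ((mball_finite a0 (r' + 1)).inter_of_right _)
    omega
  -- translate so that the basepoint is the identity
  refine ⟨(a0⁻¹ * ·) '' E, (edgeBoundary_smul_encard a0⁻¹ E).trans hEbd, ?_⟩
  intro r hr
  have hball : (a0⁻¹ * ·) '' mball S a0 r = mball S 1 r := by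
    rw [mball_smul, inv_mul_cancel]
  have hinj : Function.Injective (a0⁻¹ * ·) := mul_right_injective a0⁻¹
  constructor
  · have : (a0⁻¹ * ·) '' E ∩ mball S 1 r = (a0⁻¹ * ·) '' (E ∩ mball S a0 r) := by
      rw [Set.image_inter hinj, hball]
    rw [this, Set.ncard_image_of_injective _ hinj]
    exact hAside r hr
  · have hcompl : ((a0⁻¹ * ·) '' E)ᶜ = (a0⁻¹ * ·) '' Eᶜ :=
      (Set.image_compl_eq (Group.mulLeft_bijective a0⁻¹)).symm
    rw [hcompl]
    have : (a0⁻¹ * ·) '' Eᶜ ∩ mball S 1 r = (a0⁻¹ * ·) '' (Eᶜ ∩ mball S a0 r) := by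
      rw [Set.image_inter hinj, hball]
    rw [this, Set.ncard_image_of_injective _ hinj]
    exact hBside r hr
lemma limit_lower (U : Ultrafilter ℕ) (hU : (U : Filter ℕ) ≤ cofinite) (T : ℕ → Set H)
    (hb : ∀ r m : ℕ, r ≤ m → r ≤ (T m ∩ mball S 1 r).ncard) (r : ℕ) :
    r ≤ ({x : H | ∀ᶠ m in (U : Filter ℕ), x ∈ T m} ∩ mball S 1 r).ncard := by
  classical
  set B := mball S 1 r with hB
  have hBfin : B.Finite := mball_finite 1 r
  have hcoll : {t : Set H | t ⊆ B}.Finite := hBfin.finite_subsets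
  obtain ⟨t, htB, htU⟩ : ∃ t, t ⊆ B ∧ {m | T m ∩ B = t} ∈ U := by
    by_contra hc
    push_neg at hc
    have hev : ∀ᶠ m in (U : Filter ℕ), ∀ t ∈ {t : Set H | t ⊆ B}, ¬(T m ∩ B = t) := by
      rw [Filter.eventually_all_finite hcoll]
      intro t ht
      exact Ultrafilter.eventually_not.mpr (hc t ht)
    obtain ⟨m, hm⟩ := hev.exists
    exact hm (T m ∩ B) Set.inter_subset_right rfl
  have ht_sub : t ⊆ {x : H | ∀ᶠ m in (U : Filter ℕ), x ∈ T m} ∩ B := by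
    intro x hx
    refine ⟨Filter.mem_of_superset htU ?_, htB hx⟩
    intro m hm
    have hx' : x ∈ T m ∩ B := by rw [Set.mem_setOf_eq] at hm; rw [hm]; exact hx
    exact hx'.1
  obtain ⟨m, hmt, hmr⟩ : ∃ m, T m ∩ B = t ∧ r ≤ m := by
    have h2 : {m : ℕ | r ≤ m} ∈ (U : Filter ℕ) := by
      refine hU ?_
      rw [Filter.mem_cofinite]
      refine Set.Finite.subset (Set.finite_Iio r) ?_
      intro m hm
      simpa using hm
    obtain ⟨m, hm⟩ := Filter.nonempty_of_mem (Filter.inter_mem htU h2)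
    exact ⟨m, hm.1, hm.2⟩
  have hle : r ≤ (T m ∩ B).ncard := hb r m hmr
  rw [hmt] at hle
  exact hle.trans (Set.ncard_le_ncard ht_sub (hBfin.inter_of_right _))

lemma limit_infinite (U : Ultrafilter ℕ) (hU : (U : Filter ℕ) ≤ cofinite) (T : ℕ → Set H)
    (hb : ∀ r m : ℕ, r ≤ m → r ≤ (T m ∩ mball S 1 r).ncard) :
    {x : H | ∀ᶠ m in (U : Filter ℕ), x ∈ T m}.Infinite := by
  set L := {x : H | ∀ᶠ m in (U : Filter ℕ), x ∈ T m} with hL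
  intro hfin
  have := limit_lower U hU T hb (L.ncard + 1)
  have h2 : ({x : H | ∀ᶠ m in (U : Filter ℕ), x ∈ T m} ∩ mball S 1 (L.ncard + 1)).ncard ≤
      L.ncard := by
    refine Set.ncard_le_ncard ?_ hfin
    rw [hL]
    exact Set.inter_subset_left
  omega
lemma sym2_mem_finite (e : Sym2 H) : {x : H | x ∈ e}.Finite := by
  induction e using Sym2.ind with
  | _ a b =>
    refine Set.Finite.subset ((Set.finite_singleton b).insert a) ?_
    intro x hx
    rw [Set.mem_setOf_eq, Sym2.mem_iff] at hx
    simpa using hx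

end EndsProof

open EndsProof in
/-- a f.g. infinite group admitting arbitrarily large finite sets with
uniformly bounded edge boundary has at least 2 ends. -/
theorem stmt0 {H : Type*} [Group H] [Infinite H] (S : Finset H)
    (hsym : ∀ s ∈ S, s⁻¹ ∈ S)
    (hgen : Subgroup.closure (S : Set H) = ⊤)
    (C : ℕ) (hC : 0 < C)
    (F : ℕ → Set H) (hFfin : ∀ n, (F n).Finite)
    (hbd : ∀ n, (edgeBoundary (S : Set H) (F n)).encard ≤ C)
    (hgrow : Tendsto (fun n => (F n).ncard) atTop atTop) :
    ∃ K : Set H, K.Finite ∧ ∃ g h : H, g ∉ K ∧ h ∉ K ∧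
      (compIn (S : Set H) Kᶜ g).Infinite ∧ (compIn (S : Set H) Kᶜ h).Infinite ∧
      ¬ reachIn (S : Set H) Kᶜ g h := by
  classical
  by_cases hdone : Ends2 S
  · exact hdone
  -- extract the translated sets with small boundary and mass on both sides of every ball
  have hkey : ∀ m : ℕ, ∃ E : Set H, (edgeBoundary (S : Set H) E).encard ≤ C ∧
      ∀ r, r ≤ m → (r ≤ (E ∩ mball S 1 r).ncard ∧ r ≤ (Eᶜ ∩ mball S 1 r).ncard) := by
    intro m
    obtain ⟨n, hn⟩ := (hgrow.eventually_ge_atTop (C * V S m + C + 1)).exists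
    rcases key hgen m (hFfin n) (hbd n) hn with h | h
    · exact absurd h hdone
    · exact h
  choose Em hEbd hEbounds using hkey
  set U : Ultrafilter ℕ := Filter.hyperfilter ℕ with hUdef
  have hU : (U : Filter ℕ) ≤ cofinite := Filter.hyperfilter_le_cofinite
  set A : Set H := {x | ∀ᶠ m in (U : Filter ℕ), x ∈ Em m} with hA
  have hAinf : A.Infinite :=
    limit_infinite U hU Em (fun r m h => (hEbounds m r h).1)
  have hAc_eq : Aᶜ = {x : H | ∀ᶠ m in (U : Filter ℕ), x ∈ (Em m)ᶜ} := by
    ext x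
    rw [Set.mem_compl_iff, hA, Set.mem_setOf_eq, Set.mem_setOf_eq]
    rw [← Ultrafilter.eventually_not]
    exact Iff.rfl
  have hAcinf : Aᶜ.Infinite := by
    rw [hAc_eq]
    exact limit_infinite U hU _ (fun r m h => (hEbounds m r h).2)
  -- the limit set has small edge boundary
  have hAbd : (edgeBoundary (S : Set H) A).encard ≤ C := by
    by_contra hc
    push_neg at hc
    obtain ⟨T, hTsub, hTcard⟩ := Set.exists_subset_encard_eq (Order.add_one_le_of_lt hc)
    have hTfin : T.Finite := Set.finite_of_encard_eq_coe
      (by rw [hTcard]; exact_mod_cast rfl)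
    have hev : ∀ᶠ m in (U : Filter ℕ), ∀ e ∈ T, e ∈ edgeBoundary (S : Set H) (Em m) := by
      rw [Filter.eventually_all_finite hTfin]
      intro e he
      obtain ⟨a, b, rfl, hadj, ha, hb⟩ := hTsub he
      have haU : ∀ᶠ m in (U : Filter ℕ), a ∈ Em m := ha
      have hbU : ∀ᶠ m in (U : Filter ℕ), b ∉ Em m := Ultrafilter.eventually_not.mpr hb
      filter_upwards [haU, hbU] with m h1 h2
      exact ⟨a, b, rfl, hadj, h1, h2⟩
    obtain ⟨m, hm⟩ := hev.exists
    have h3 : T.encard ≤ (edgeBoundary (S : Set H) (Em m)).encard :=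
      Set.encard_mono (fun e he => hm e he)
    rw [hTcard] at h3
    have h4 := h3.trans (hEbd m)
    rw [show ((C : ℕ∞) + 1) = ((C + 1 : ℕ) : ℕ∞) by exact_mod_cast rfl] at h4
    have := (Nat.cast_le (α := ℕ∞)).mp h4
    omega
  have hAbd_fin : (edgeBoundary (S : Set H) A).Finite := Set.finite_of_encard_le_coe hAbd
  -- K = endpoints of boundary edges of A
  set K : Set H := ⋃ e ∈ edgeBoundary (S : Set H) A, {x : H | x ∈ e} with hK
  have hKfin : K.Finite := hAbd_fin.biUnion (fun e _ => sym2_mem_finite e)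
  have hKB : ∀ a b : H, (cayley (S : Set H)).Adj a b → a ∈ A → b ∉ A → a ∈ K ∧ b ∈ K := by
    intro a b hadj ha hb
    have he : s(a, b) ∈ edgeBoundary (S : Set H) A := ⟨a, b, rfl, hadj, ha, hb⟩
    exact ⟨Set.mem_biUnion he (by simp), Set.mem_biUnion he (by simp)⟩
  -- the infinite component on the A side
  have hXinf : (A \ K).Infinite := hAinf.diff hKfin
  have hInnX : (innB S (A \ K)).Finite := by
    refine Set.Finite.subset (hKfin.biUnion (fun k _ => nbhd_finite (S := S) k)) ?_
    rintro a ⟨⟨haA, haK⟩, b, hadj, hb⟩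
    by_cases hbA : b ∈ A
    · have hbK : b ∈ K := by
        by_contra hbK
        exact hb ⟨hbA, hbK⟩
      exact Set.mem_biUnion hbK hadj.symm
    · exact absurd (hKB a b hadj haA hbA).1 haK
  obtain ⟨g, hgX, hgInf⟩ : ∃ g, g ∈ A \ K ∧ (compIn (S : Set H) (A \ K) g).Infinite := by
    by_contra hcon
    push_neg at hcon
    obtain ⟨z, hz⟩ := hAcinf.nonempty
    have hzX : z ∉ A \ K := fun hmem => hz hmem.1
    refine hXinf (Set.Finite.subset (hInnX.biUnion
      (fun a ha => hcon a (innB_subset _ ha))) ?_)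
    intro x hx
    obtain ⟨a, hr, ha⟩ := exists_innB hgen hx hzX
    exact Set.mem_biUnion ha (reachIn_symm hr)
  -- the infinite component on the complement side
  have hYinf : (Aᶜ \ K).Infinite := hAcinf.diff hKfin
  have hInnY : (innB S (Aᶜ \ K)).Finite := by
    refine Set.Finite.subset (hKfin.biUnion (fun k _ => nbhd_finite (S := S) k)) ?_
    rintro a ⟨⟨haA, haK⟩, b, hadj, hb⟩
    by_cases hbA : b ∈ A
    · exact absurd (hKB b a hadj.symm hbA haA).2 haK
    · have hbK : b ∈ K := by
        by_contra hbK
        exact hb ⟨hbA, hbK⟩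
      exact Set.mem_biUnion hbK hadj.symm
  obtain ⟨h, hhY, hhInf⟩ : ∃ h, h ∈ Aᶜ \ K ∧ (compIn (S : Set H) (Aᶜ \ K) h).Infinite := by
    by_contra hcon
    push_neg at hcon
    obtain ⟨z, hz⟩ := hAinf.nonempty
    have hzY : z ∉ Aᶜ \ K := fun hmem => hmem.1 hz
    refine hYinf (Set.Finite.subset (hInnY.biUnion
      (fun a ha => hcon a (innB_subset _ ha))) ?_)
    intro x hx
    obtain ⟨a, hr, ha⟩ := exists_innB hgen hx hzY
    exact Set.mem_biUnion ha (reachIn_symm hr)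
  refine ⟨K, hKfin, g, h, hgX.2, hhY.2, ?_, ?_, ?_⟩
  · exact hgInf.mono (compIn_mono (fun x hx => hx.2) g)
  · exact hhInf.mono (compIn_mono (fun x hx => hx.2) h)
  · rintro ⟨w, hw⟩
    obtain ⟨u, v, hu, _, hadj, huA, hvA⟩ := crossing w hgX.1 hhY.1
    exact (hw u hu) (hKB u v hadj huA hvA).1
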